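/- Probabilistic form of Proposition 2: in the spectral reconstruction x̂ = U·diag(g_d(λ_i)·g_c(λ_i))·Uᵀ·x + U·diag(g_d(λ_i))·Uᵀ·ε with U orthogonal, x deterministic with x* = Uᵀx, ε mean-zero with E[ε_i ε_j] = σ²·δ_{ij} and σ² > 0, if the deconvolution filter takes the wiener values g_d(λ_i) = g_c(λ_i)·(x*_i)²/(g_c(λ_i)²·(x*_i)² + σ²), then E‖x − x̂‖² = Σ_{i=1}^{N} σ²·(x*_i)²/(g_c(λ_i)²·(x*_i)² + σ²), and this is at most Σ_{i=1}^{N} σ²/g_c(λ_i)² whenever g_c(λ_i) ≠ 0 for all i. -/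

import Mathlib

open MeasureTheory Matrix

private lemma l2_mul_integrable {Ω : Type*} [MeasurableSpace Ω] {μ : Measure Ω}
    {f g : Ω → ℝ} (hf : MemLp f 2 μ) (hg : MemLp g 2 μ) :
    Integrable (fun ω => f ω * g ω) μ := by
  have h := ((hf.add hg).integrable_sq.sub hf.integrable_sq).sub hg.integrable_sq
  have heq : (fun ω => f ω * g ω)
      = fun ω => (((f ω + g ω) ^ 2 - f ω ^ 2) - g ω ^ 2) / 2 := by
    funext ω; ring
  rw [heq]
  exact h.div_const 2

/-- probabilistic form of Proposition 2: in the spectral reconstruction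
`x̂ = U diag(g_d(λ_i) g_c(λ_i)) Uᵀ x + U diag(g_d(λ_i)) Uᵀ ε` with `U` orthogonal,
`x` deterministic with `x* = Uᵀ x`, `ε` mean-zero with `E[ε_i ε_j] = σ² δ_{ij}` and
`σ² > 0`, if the deconvolution filter takes the wiener values
`g_d(λ_i) = g_c(λ_i) (x*_i)² / (g_c(λ_i)² (x*_i)² + σ²)`, then
`E‖x − x̂‖² = ∑ i, σ² (x*_i)² / (g_c(λ_i)² (x*_i)² + σ²)`, and this is at most
`∑ i, σ² / g_c(λ_i)²` whenever `g_c(λ_i) ≠ 0` for all `i`. -/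
theorem wiener_filter_reconstruction_mse
    {N : ℕ} {Ω : Type*} [MeasurableSpace Ω] (μ : Measure Ω) [IsProbabilityMeasure μ]
    (ε : Ω → Fin N → ℝ) (hεL2 : ∀ i, MemLp (fun ω => ε ω i) 2 μ)
    (hεmean : ∀ i, ∫ ω, ε ω i ∂μ = 0)
    (σ2 : ℝ) (hσ2 : 0 < σ2)
    (hcov : ∀ i j, ∫ ω, ε ω i * ε ω j ∂μ = if i = j then σ2 else 0)
    (U : Matrix (Fin N) (Fin N) ℝ) (hU : Uᵀ * U = 1)
    (lam : Fin N → ℝ) (gc gd : ℝ → ℝ) (x : Fin N → ℝ)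
    (xstar : Fin N → ℝ) (hxstar : xstar = Uᵀ.mulVec x)
    (hgd : ∀ i, gd (lam i)
      = gc (lam i) * xstar i ^ 2 / (gc (lam i) ^ 2 * xstar i ^ 2 + σ2))
    (xhat : Ω → Fin N → ℝ)
    (hxhat : ∀ ω, xhat ω =
      U.mulVec ((Matrix.diagonal fun i => gd (lam i) * gc (lam i)).mulVec (Uᵀ.mulVec x))
        + U.mulVec ((Matrix.diagonal fun i => gd (lam i)).mulVec (Uᵀ.mulVec (ε ω)))) :
    (∫ ω, ‖(EuclideanSpace.equiv (Fin N) ℝ).symm (x - xhat ω)‖ ^ 2 ∂μ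
        = ∑ i, σ2 * xstar i ^ 2 / (gc (lam i) ^ 2 * xstar i ^ 2 + σ2))
      ∧ ((∀ i, gc (lam i) ≠ 0) →
          ∑ i, σ2 * xstar i ^ 2 / (gc (lam i) ^ 2 * xstar i ^ 2 + σ2)
            ≤ ∑ i, σ2 / gc (lam i) ^ 2) := by
  classical
  have hDpos : ∀ i, 0 < gc (lam i) ^ 2 * xstar i ^ 2 + σ2 := fun i => by positivity
  constructor
  · -- main MSE computation
    -- spectral noise
    set εs : Fin N → Ω → ℝ := fun i ω => ∑ j, U j i * ε ω j with hεs
    have hεsL2 : ∀ i, MemLp (εs i) 2 μ := fun i =>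
      memLp_finset_sum _ fun j _ => (hεL2 j).const_mul (U j i)
    have hεsInt : ∀ i, Integrable (εs i) μ := fun i => (hεsL2 i).integrable one_le_two
    have hεsmean : ∀ i, ∫ ω, εs i ω ∂μ = 0 := by
      intro i
      rw [integral_finset_sum _ fun j _ => ((hεL2 j).integrable one_le_two).const_mul _]
      simp only [integral_const_mul, hεmean, mul_zero, Finset.sum_const_zero]
    have hUcol : ∀ i : Fin N, ∑ j, U j i * U j i = 1 := by
      intro i
      have h := congrFun (congrFun hU i) i
      simpa [Matrix.mul_apply, Matrix.transpose_apply, Matrix.one_apply] using h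
    have hεsvar : ∀ i, ∫ ω, εs i ω ^ 2 ∂μ = σ2 := by
      intro i
      have hexp : ∀ ω, εs i ω ^ 2 = ∑ j, ∑ k, U j i * U k i * (ε ω j * ε ω k) := by
        intro ω
        rw [sq, hεs]
        rw [Finset.sum_mul_sum]
        refine Finset.sum_congr rfl fun j _ => Finset.sum_congr rfl fun k _ => by ring
      simp_rw [hexp]
      rw [integral_finset_sum]
      · have : ∀ j, ∫ ω, ∑ k, U j i * U k i * (ε ω j * ε ω k) ∂μ
            = ∑ k, U j i * U k i * ∫ ω, ε ω j * ε ω k ∂μ := by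
          intro j
          rw [integral_finset_sum _ fun k _ =>
            (l2_mul_integrable (hεL2 j) (hεL2 k)).const_mul _]
          simp_rw [integral_const_mul]
        simp_rw [this, hcov]
        simp only [mul_ite, mul_zero]
        rw [Finset.sum_congr rfl fun j _ => Finset.sum_ite_eq (Finset.univ) j
          (fun k => U j i * U k i * σ2)]
        simp only [Finset.mem_univ, if_true]
        rw [← Finset.sum_mul, hUcol i, one_mul]
      · intro j _
        exact integrable_finset_sum _ fun k _ =>
          (l2_mul_integrable (hεL2 j) (hεL2 k)).const_mul _
    -- pointwise norm formula
    have hUUT : U * Uᵀ = 1 := mul_eq_one_comm.mp hU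
    have hxU : U.mulVec xstar = x := by
      rw [hxstar, Matrix.mulVec_mulVec, hUUT, Matrix.one_mulVec]
    have hnorm : ∀ ω, ‖(EuclideanSpace.equiv (Fin N) ℝ).symm (x - xhat ω)‖ ^ 2
        = ∑ i, ((1 - gd (lam i) * gc (lam i)) * xstar i - gd (lam i) * εs i ω) ^ 2 := by
      intro ω
      have hvec : x - xhat ω = U.mulVec
          (fun i => (1 - gd (lam i) * gc (lam i)) * xstar i - gd (lam i) * εs i ω) := by
        have harg : (fun i => (1 - gd (lam i) * gc (lam i)) * xstar i - gd (lam i) * εs i ω)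
            = xstar - (Matrix.diagonal fun i => gd (lam i) * gc (lam i)).mulVec (Uᵀ.mulVec x)
              - (Matrix.diagonal fun i => gd (lam i)).mulVec (Uᵀ.mulVec (ε ω)) := by
          funext i
          have h1 : (Uᵀ.mulVec (ε ω)) i = εs i ω := by
            simp [Matrix.mulVec, dotProduct, Matrix.transpose_apply, hεs]
          simp only [Pi.sub_apply, Matrix.mulVec_diagonal, ← hxstar, h1]
          ring
        rw [harg, Matrix.mulVec_sub, Matrix.mulVec_sub, hxU, hxhat ω]
        abel
      have hortho : ∀ w : Fin N → ℝ, ∑ i, (U.mulVec w i) ^ 2 = ∑ i, (w i) ^ 2 := by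
        intro w
        have h1 : U.mulVec w ⬝ᵥ U.mulVec w = w ⬝ᵥ w := by
          rw [Matrix.dotProduct_mulVec, ← Matrix.mulVec_transpose,
            Matrix.mulVec_mulVec, hU, Matrix.one_mulVec]
        simpa [dotProduct, sq] using h1
      have hn : ‖(EuclideanSpace.equiv (Fin N) ℝ).symm (x - xhat ω)‖ ^ 2
          = ∑ i, ((x - xhat ω) i) ^ 2 := by
        rw [EuclideanSpace.norm_eq, Real.sq_sqrt (by positivity)]
        simp [Real.norm_eq_abs, sq_abs]
      rw [hn, hvec, hortho]
    simp_rw [hnorm]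
    -- integrate term by term
    have hterml2 : ∀ i, MemLp
        (fun ω => (1 - gd (lam i) * gc (lam i)) * xstar i - gd (lam i) * εs i ω) 2 μ :=
      fun i => (memLp_const _).sub ((hεsL2 i).const_mul _)
    rw [integral_finset_sum _ fun i _ => (hterml2 i).integrable_sq]
    refine Finset.sum_congr rfl fun i _ => ?_
    -- per-coordinate expectation
    set c : ℝ := (1 - gd (lam i) * gc (lam i)) * xstar i with hc
    set g : ℝ := gd (lam i) with hg
    have hexp : (fun ω => (c - g * εs i ω) ^ 2)
        = fun ω => (c ^ 2 - (2 * c * g) * εs i ω) + g ^ 2 * εs i ω ^ 2 := by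
      funext ω; ring
    calc ∫ ω, (c - g * εs i ω) ^ 2 ∂μ
        = ∫ ω, ((c ^ 2 - (2 * c * g) * εs i ω) + g ^ 2 * εs i ω ^ 2) ∂μ := by rw [hexp]
      _ = (∫ ω, (c ^ 2 - (2 * c * g) * εs i ω) ∂μ) + ∫ ω, g ^ 2 * εs i ω ^ 2 ∂μ := by
          exact integral_add ((integrable_const _).sub ((hεsInt i).const_mul _))
            (((hεsL2 i).integrable_sq).const_mul _)
      _ = (c ^ 2 - (2 * c * g) * ∫ ω, εs i ω ∂μ) + g ^ 2 * ∫ ω, εs i ω ^ 2 ∂μ := by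
          rw [integral_sub (integrable_const _) ((hεsInt i).const_mul _),
            integral_const_mul, integral_const_mul, integral_const]
          simp
      _ = c ^ 2 + g ^ 2 * σ2 := by rw [hεsmean i, hεsvar i]; ring
      _ = σ2 * xstar i ^ 2 / (gc (lam i) ^ 2 * xstar i ^ 2 + σ2) := by
          rw [hc, hg, hgd i]
          have hD := (hDpos i).ne'
          field_simp
          ring
  · intro hgc
    refine Finset.sum_le_sum fun i _ => ?_
    rw [div_le_div_iff₀ (hDpos i) (lt_of_le_of_ne (sq_nonneg _) (Ne.symm (pow_ne_zero 2 (hgc i))))]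
    nlinarith [sq_nonneg σ2, sq_nonneg (gc (lam i) * xstar i), hσ2.le]
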